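/- Let v : [0,b) → ℝ be C¹ with v(0) = 0, 0 < b < ∞, and suppose v'(t) - 2c·v(t) < 2(α - 𝒱₀(ℓ(t))) for all t ∈ [0,b), where c > 0, α ∈ ℝ, 𝒱₀ : [0,∞) → ℝ is non-increasing C¹ with α > 𝒱₀(0), and ℓ : [0,b) → [0,∞) is continuous non-decreasing. Let v₀ be the solution of v₀'(t) - 2c·v₀(t) = 2(α - 𝒱₀(ℓ(t))) with v₀(0) = 0. Then v'(t) ≤ v₀'(t) ≤ 2e^{2cb}(α - 𝒱₀(ℓ(t))) for all t ∈ [0,b). -/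

import Mathlib

open Set

private lemma mono_aux {f f' : ℝ → ℝ} {t : ℝ} (ht : 0 ≤ t)
    (hf : ∀ s ∈ Set.Icc (0:ℝ) t, HasDerivAt f (f' s) s)
    (hf' : ∀ s ∈ Set.Icc (0:ℝ) t, 0 ≤ f' s) : f 0 ≤ f t := by
  have hcont : ContinuousOn f (Set.Icc 0 t) := fun s hs =>
    ((hf s hs).continuousAt).continuousWithinAt
  have hmono : MonotoneOn f (Set.Icc 0 t) := by
    apply monotoneOn_of_deriv_nonneg (convex_Icc 0 t) hcont
    · intro s hs
      rw [interior_Icc] at hs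
      exact ((hf s (Set.mem_Icc_of_Ioo hs)).differentiableAt).differentiableWithinAt
    · intro s hs
      rw [interior_Icc] at hs
      rw [(hf s (Set.mem_Icc_of_Ioo hs)).deriv]
      exact hf' s (Set.mem_Icc_of_Ioo hs)
  exact hmono (Set.left_mem_Icc.mpr ht) (Set.right_mem_Icc.mpr ht) ht

/-- Central differential-inequality estimate: if `v' - 2c v < 2(α - 𝒱₀(ℓ(t)))` with
`v(0) = 0`, where `𝒱₀` is non-increasing C¹ with `α > 𝒱₀(0)` and `ℓ ≥ 0` is continuous
non-decreasing, and `v₀` solves the associated linear equation with `v₀(0) = 0`, then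
`v' ≤ v₀' ≤ 2e^{2cb}(α - 𝒱₀(ℓ(t)))` on `[0,b)`. -/
theorem linear_comparison_estimate (b c α : ℝ) (hb : 0 < b) (hc : 0 < c)
    (V₀ : ℝ → ℝ) (hV₀C1 : ContDiffOn ℝ 1 V₀ (Set.Ici 0))
    (hV₀mono : AntitoneOn V₀ (Set.Ici 0)) (hα : V₀ 0 < α)
    (ℓ : ℝ → ℝ) (hℓcont : ContinuousOn ℓ (Set.Ico 0 b))
    (hℓnonneg : ∀ t ∈ Set.Ico (0:ℝ) b, 0 ≤ ℓ t)
    (hℓmono : MonotoneOn ℓ (Set.Ico 0 b))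
    (v v' : ℝ → ℝ) (hv : ∀ t ∈ Set.Ico (0:ℝ) b, HasDerivAt v (v' t) t)
    (hv0 : v 0 = 0)
    (hsub : ∀ t ∈ Set.Ico (0:ℝ) b, v' t - 2 * c * v t < 2 * (α - V₀ (ℓ t)))
    (v₀ : ℝ → ℝ)
    (hv₀ : ∀ t ∈ Set.Ico (0:ℝ) b,
      HasDerivAt v₀ (2 * c * v₀ t + 2 * (α - V₀ (ℓ t))) t)
    (hv₀0 : v₀ 0 = 0) :
    ∀ t ∈ Set.Ico (0:ℝ) b,
      v' t ≤ 2 * c * v₀ t + 2 * (α - V₀ (ℓ t)) ∧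
      2 * c * v₀ t + 2 * (α - V₀ (ℓ t)) ≤ 2 * Real.exp (2 * c * b) * (α - V₀ (ℓ t)) := by
  intro t ht
  obtain ⟨ht0, htb⟩ := ht
  have hsub' : Set.Icc (0:ℝ) t ⊆ Set.Ico 0 b := fun s hs =>
    ⟨hs.1, lt_of_le_of_lt hs.2 htb⟩
  -- positivity of α - V₀ (ℓ t)
  have hαt : 0 < α - V₀ (ℓ t) := by
    have h1 : V₀ (ℓ t) ≤ V₀ 0 :=
      hV₀mono (Set.mem_Ici.mpr le_rfl) (Set.mem_Ici.mpr (hℓnonneg t ⟨ht0, htb⟩))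
        (hℓnonneg t ⟨ht0, htb⟩)
    linarith
  -- derivative of s ↦ exp (-(2*c*s))
  have hexp : ∀ s : ℝ, HasDerivAt (fun s => Real.exp (-(2 * c * s)))
      (-(2 * c) * Real.exp (-(2 * c * s))) s := by
    intro s
    have h1 : HasDerivAt (fun s : ℝ => -(2 * c * s)) (-(2 * c)) s := by
      simpa [Pi.neg_def] using ((hasDerivAt_id s).const_mul (2 * c)).neg
    simpa [mul_comm, Function.comp_def] using (Real.hasDerivAt_exp (-(2 * c * s))).comp s h1
  -- Part A : v t ≤ v₀ t
  have hA : v t ≤ v₀ t := by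
    have hG : ∀ s ∈ Set.Icc (0:ℝ) t,
        HasDerivAt (fun s => Real.exp (-(2 * c * s)) * (v₀ s - v s))
          (Real.exp (-(2 * c * s)) *
            ((2 * c * v₀ s + 2 * (α - V₀ (ℓ s)) - v' s) - 2 * c * (v₀ s - v s))) s := by
      intro s hs
      have := (hexp s).mul ((hv₀ s (hsub' hs)).sub (hv s (hsub' hs)))
      exact this.congr_deriv (by simp only [Pi.sub_apply]; ring)
    have hG' : ∀ s ∈ Set.Icc (0:ℝ) t,
        0 ≤ Real.exp (-(2 * c * s)) *
            ((2 * c * v₀ s + 2 * (α - V₀ (ℓ s)) - v' s) - 2 * c * (v₀ s - v s)) := by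
      intro s hs
      have h1 := hsub s (hsub' hs)
      have h2 := Real.exp_pos (-(2 * c * s))
      nlinarith
    have := mono_aux ht0 hG hG'
    simp only [hv0, hv₀0, mul_zero, sub_zero] at this
    have h2 := Real.exp_pos (-(2 * c * t))
    nlinarith
  constructor
  · have h1 := hsub t ⟨ht0, htb⟩
    nlinarith
  -- Part B
  · have hH : ∀ s ∈ Set.Icc (0:ℝ) t,
        HasDerivAt (fun s => (α - V₀ (ℓ t)) * (1 - Real.exp (-(2 * c * s)))
            - c * (Real.exp (-(2 * c * s)) * v₀ s))
          (2 * c * Real.exp (-(2 * c * s)) * (V₀ (ℓ s) - V₀ (ℓ t))) s := by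
      intro s hs
      have h1 : HasDerivAt (fun s => (1 : ℝ) - Real.exp (-(2 * c * s)))
          (-(-(2 * c) * Real.exp (-(2 * c * s)))) s := by
        simpa [Pi.sub_def] using (hasDerivAt_const s (1:ℝ)).sub (hexp s)
      have h2 := (hexp s).mul (hv₀ s (hsub' hs))
      have := (h1.const_mul (α - V₀ (ℓ t))).sub (h2.const_mul c)
      exact this.congr_deriv (by ring)
    have hH' : ∀ s ∈ Set.Icc (0:ℝ) t,
        0 ≤ 2 * c * Real.exp (-(2 * c * s)) * (V₀ (ℓ s) - V₀ (ℓ t)) := by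
      intro s hs
      have hls : ℓ s ≤ ℓ t := hℓmono (hsub' hs) ⟨ht0, htb⟩ hs.2
      have hVs : V₀ (ℓ t) ≤ V₀ (ℓ s) :=
        hV₀mono (Set.mem_Ici.mpr (hℓnonneg s (hsub' hs)))
          (Set.mem_Ici.mpr (hℓnonneg t ⟨ht0, htb⟩)) hls
      have h2 := Real.exp_pos (-(2 * c * s))
      have : (0:ℝ) ≤ V₀ (ℓ s) - V₀ (ℓ t) := by linarith
      positivity
    have hkey := mono_aux ht0 hH hH'
    norm_num [hv₀0] at hkey
    -- hkey : ... 0 ≤ H t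
    have hE : Real.exp (-(2 * c * t)) * Real.exp (2 * c * t) = 1 := by
      rw [← Real.exp_add]; norm_num
    have hEb : Real.exp (2 * c * t) ≤ Real.exp (2 * c * b) := by
      apply Real.exp_le_exp.mpr; nlinarith
    have hEt : (1:ℝ) ≤ Real.exp (2 * c * t) := by
      rw [Real.one_le_exp_iff]; positivity
    have h2 := Real.exp_pos (-(2 * c * t))
    -- from hkey: c * exp(-(2ct)) * v₀ t ≤ (α - V₀ℓt) * (1 - exp(-(2ct)))
    have hcv : c * v₀ t ≤ (α - V₀ (ℓ t)) * (Real.exp (2 * c * t) - 1) := by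
      have h3 := Real.exp_pos (2 * c * t)
      nlinarith [mul_le_mul_of_nonneg_right hkey (le_of_lt h3)]
    nlinarith
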